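/- Let A be a finite dimensional C*-algebra and E a Hilbert A-module that is not finitely generated. Then every nonzero compact operator K ∈ K(E) has a proper nonzero hyperinvariant closed submodule, i.e., a closed submodule W with {0} ≠ W ≠ E such that S(W) ⊆ W for every S ∈ L(E) commuting with K. -/

import Mathlib

open scoped RightActions

/-- The Hilbert C⋆-module class as it stood in Mathlib of December 2024 (right `A`-action
via `Aᵐᵒᵖ`); Mathlib's `CStarModule` now uses a left action. -/
class CStarModuleOld (A E : Type*) [NonUnitalSemiring A] [StarRing A] [Module ℂ A]
    [AddCommGroup E] [Module ℂ E] [PartialOrder A] [SMul Aᵐᵒᵖ E] [Norm A] [Norm E]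
    extends Inner A E where
  inner_add_right {x} {y} {z} : inner x (y + z) = inner x y + inner x z
  inner_self_nonneg {x} : 0 ≤ inner x x
  inner_self {x} : inner x x = 0 ↔ x = 0
  inner_op_smul_right {a : A} {x y : E} : inner x (y <• a) = inner x y * a
  inner_smul_right_complex {z : ℂ} {x} {y} : inner x (z • y) = z • inner x y
  star_inner x y : star (inner x y) = inner y x
  norm_eq_sqrt_norm_inner_self x : ‖x‖ = √‖inner x x‖

section

variable {A : Type*} [CStarAlgebra A] [PartialOrder A] [StarOrderedRing A]
variable {E : Type*} [NormedAddCommGroup E] [NormedSpace ℂ E] [SMul Aᵐᵒᵖ E]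
  [CStarModuleOld A E] [CompleteSpace E]

local notation "⟪" x ", " y "⟫" => inner (𝕜 := A) x y

/-- `T` is a bounded adjointable `A`-linear operator with adjoint `T'`. -/
def IsAdjointableWith (T T' : E →L[ℂ] E) : Prop :=
  (∀ (a : A) (x : E), T (x <• a) = T x <• a) ∧
  ∀ x y : E, ⟪T x, y⟫ = ⟪x, T' y⟫

/-- The orthogonal complement of a subset of a Hilbert C*-module. -/
def ortho (W : Set E) : Set E := {y | ∀ x ∈ W, ⟪x, y⟫ = (0 : A)}

/-- `W` is orthogonally complemented in `E`. -/
def OrthoComplemented (W : Set E) : Prop :=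
  ∀ z : E, ∃ x ∈ W, ∃ y ∈ ortho (A := A) W, z = x + y

/-- `W` is a closed `A`-submodule of `E`. -/
def IsClosedSubmodule (W : Submodule ℂ E) : Prop :=
  IsClosed (W : Set E) ∧ ∀ (a : A), ∀ x ∈ W, x <• a ∈ W

/-- An orthogonal projection in `L(E)`: an `A`-linear, idempotent, self-adjoint operator. -/
def IsOrthoProjection (P : E →L[ℂ] E) : Prop :=
  (∀ (a : A) (x : E), P (x <• a) = P x <• a) ∧ P.comp P = P ∧
  ∀ x y : E, ⟪P x, y⟫ = ⟪x, P y⟫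

/-- A "compact" operator on a Hilbert C*-module: a member of the closure of the span
of the rank-one operators `z ↦ x ⟨y, z⟩`. -/
def IsCompactOp (K : E →L[ℂ] E) : Prop :=
  K ∈ closure (Submodule.span ℂ
    {S : E →L[ℂ] E | ∃ x y : E, ∀ z : E, S z = x <• ⟪y, z⟫} : Set (E →L[ℂ] E))

/-- `E` is a finitely generated Hilbert `A`-module. -/
def IsFinGen : Prop :=
  ∃ (n : ℕ) (g : Fin n → E), ∀ x : E,
    x ∈ Submodule.span ℂ {y : E | ∃ (i : Fin n) (a : A), y = g i <• a}

/-- `T` is invertible in `L(E)`, the bounded adjointable operators. -/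
def InvertibleInL (T : E →L[ℂ] E) : Prop :=
  ∃ S S' : E →L[ℂ] E, IsAdjointableWith (A := A) S S' ∧ S.comp T = 1 ∧ T.comp S = 1

set_option linter.unusedSectionVars false
set_option maxHeartbeats 1000000


lemma CStarModuleOld.inner_zero_right {x : E} : ⟪x, (0 : E)⟫ = 0 := by
  have h : ⟪x, (0 : E) + 0⟫ = ⟪x, (0 : E)⟫ + ⟪x, (0 : E)⟫ := CStarModuleOld.inner_add_right
  rw [add_zero] at h
  exact (left_eq_add.mp h)

lemma CStarModuleOld.inner_sub_right {x y z : E} : ⟪x, y - z⟫ = ⟪x, y⟫ - ⟪x, z⟫ := by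
  have h : ⟪x, ((-1 : ℂ) • z)⟫ = (-1 : ℂ) • ⟪x, z⟫ := CStarModuleOld.inner_smul_right_complex
  rw [neg_one_smul, neg_one_smul] at h
  rw [sub_eq_add_neg, CStarModuleOld.inner_add_right, h, ← sub_eq_add_neg]

lemma CStarModuleOld.inner_op_smul_left {a : A} {x y : E} : ⟪x <• a, y⟫ = star a * ⟪x, y⟫ := by
  rw [← CStarModuleOld.star_inner y, CStarModuleOld.inner_op_smul_right, star_mul,
    CStarModuleOld.star_inner]

lemma CStarModuleOld.norm_sq_eq {x : E} : ‖x‖ ^ 2 = ‖⟪x, x⟫‖ := by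
  rw [CStarModuleOld.norm_eq_sqrt_norm_inner_self (A := A) x, Real.sq_sqrt (norm_nonneg _)]

lemma hcm_ext {u v : E} (h : ∀ w : E, ⟪w, u⟫ = ⟪w, v⟫) : u = v := by
  have h2 : ⟪u - v, u - v⟫ = 0 := by
    rw [CStarModuleOld.inner_sub_right, h (u - v), sub_self]
  exact sub_eq_zero.mp (CStarModuleOld.inner_self.mp h2)

lemma hcm_smul_smul (x : E) (a b : A) : (x <• a) <• b = x <• (a * b) := by
  apply hcm_ext (A := A); intro w
  rw [CStarModuleOld.inner_op_smul_right, CStarModuleOld.inner_op_smul_right,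
    CStarModuleOld.inner_op_smul_right, mul_assoc]

lemma hcm_smul_one (x : E) : x <• (1 : A) = x := by
  apply hcm_ext (A := A); intro w
  rw [CStarModuleOld.inner_op_smul_right, mul_one]

lemma hcm_smul_comm (c : ℂ) (x : E) (a : A) : (c • x) <• a = c • (x <• a) := by
  apply hcm_ext (A := A); intro w
  rw [CStarModuleOld.inner_op_smul_right, CStarModuleOld.inner_smul_right_complex,
    CStarModuleOld.inner_smul_right_complex, CStarModuleOld.inner_op_smul_right, smul_mul_assoc]

lemma hcm_smul_complex (c : ℂ) (x : E) (a : A) : x <• (c • a) = c • (x <• a) := by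
  apply hcm_ext (A := A); intro w
  rw [CStarModuleOld.inner_op_smul_right, CStarModuleOld.inner_smul_right_complex,
    CStarModuleOld.inner_op_smul_right, mul_smul_comm]

lemma hcm_add_smul (x y : E) (a : A) : (x + y) <• a = x <• a + y <• a := by
  apply hcm_ext (A := A); intro w
  rw [CStarModuleOld.inner_op_smul_right, CStarModuleOld.inner_add_right,
    CStarModuleOld.inner_add_right, CStarModuleOld.inner_op_smul_right,
    CStarModuleOld.inner_op_smul_right, add_mul]

lemma hcm_smul_add (x : E) (a b : A) : x <• (a + b) = x <• a + x <• b := by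
  apply hcm_ext (A := A); intro w
  rw [CStarModuleOld.inner_op_smul_right, CStarModuleOld.inner_add_right,
    CStarModuleOld.inner_op_smul_right, CStarModuleOld.inner_op_smul_right, mul_add]

lemma hcm_zero_smul (a : A) : (0 : E) <• a = 0 := by
  apply hcm_ext (A := A); intro w
  rw [CStarModuleOld.inner_op_smul_right, CStarModuleOld.inner_zero_right,
    zero_mul]

lemma hcm_norm_smul_le (x : E) (a : A) : ‖x <• a‖ ≤ ‖x‖ * ‖a‖ := by
  have h1 : ‖x <• a‖ ^ 2 = ‖star a * ⟪x, x⟫ * a‖ := by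
    rw [CStarModuleOld.norm_sq_eq (A := A)]
    congr 1
    rw [CStarModuleOld.inner_op_smul_right, CStarModuleOld.inner_op_smul_left]
  have h2 : ‖star a * ⟪x, x⟫ * a‖ ≤ ‖a‖ * ‖x‖ ^ 2 * ‖a‖ := by
    calc ‖star a * ⟪x, x⟫ * a‖ ≤ ‖star a * ⟪x, x⟫‖ * ‖a‖ := norm_mul_le _ _
      _ ≤ ‖star a‖ * ‖⟪x, x⟫‖ * ‖a‖ := by gcongr; exact norm_mul_le _ _
      _ = ‖a‖ * ‖x‖ ^ 2 * ‖a‖ := by rw [norm_star, CStarModuleOld.norm_sq_eq (A := A)]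
  have h3 : ‖x <• a‖ ^ 2 ≤ (‖x‖ * ‖a‖) ^ 2 := by
    rw [h1]; calc ‖star a * ⟪x, x⟫ * a‖ ≤ ‖a‖ * ‖x‖ ^ 2 * ‖a‖ := h2
      _ = (‖x‖ * ‖a‖) ^ 2 := by ring
  exact (pow_le_pow_iff_left₀ (norm_nonneg _) (by positivity) two_ne_zero).mp h3

/-- Right multiplication by `a : A` as a continuous linear map. -/
noncomputable def Rmul (a : A) : E →L[ℂ] E :=
  LinearMap.mkContinuous
    { toFun := fun x => x <• a
      map_add' := fun x y => hcm_add_smul x y a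
      map_smul' := fun c x => hcm_smul_comm c x a } ‖a‖
    (fun x => by rw [mul_comm]; exact hcm_norm_smul_le x a)

@[simp] lemma Rmul_apply (a : A) (x : E) : Rmul (E := E) a x = x <• a := rfl

/-- the set of rank-one operators -/
def rk1 : Set (E →L[ℂ] E) := {S | ∃ x y : E, ∀ z : E, S z = x <• ⟪y, z⟫}

def Alin (T : E →L[ℂ] E) : Prop := ∀ (a : A) (x : E), T (x <• a) = T x <• a

lemma alin_isClosed : IsClosed {T : E →L[ℂ] E | Alin (A := A) T} := by
  have heq : {T : E →L[ℂ] E | Alin (A := A) T} =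
      ⋂ (a : A), ⋂ (x : E), {T : E →L[ℂ] E | T (x <• a) = Rmul a (T x)} := by
    ext T
    simp only [Set.mem_iInter, Set.mem_setOf_eq, Alin, Rmul_apply]
  rw [heq]
  refine isClosed_iInter fun a => isClosed_iInter fun x => isClosed_eq ?_ ?_
  · exact (ContinuousLinearMap.apply ℂ E (x <• a)).continuous
  · exact (Rmul a).continuous.comp (ContinuousLinearMap.apply ℂ E x).continuous

lemma alin_of_mem_span {T : E →L[ℂ] E}
    (hT : T ∈ Submodule.span ℂ (rk1 (A := A) (E := E))) : Alin (A := A) T := by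
  induction hT using Submodule.span_induction with
  | mem S hS =>
    obtain ⟨x, y, hxy⟩ := hS
    intro a z
    rw [hxy, hxy, CStarModuleOld.inner_op_smul_right, ← hcm_smul_smul]
  | zero => intro a z; simp [hcm_zero_smul]
  | add S₁ S₂ h₁ h₂ ih₁ ih₂ =>
    intro a z
    simp only [ContinuousLinearMap.add_apply, ih₁ a z, ih₂ a z, hcm_add_smul]
  | smul c S hS ih =>
    intro a z
    simp only [ContinuousLinearMap.smul_apply, ih a z, hcm_smul_comm]

lemma alin_of_isCompactOp {T : E →L[ℂ] E}
    (hT : T ∈ closure (Submodule.span ℂ (rk1 (A := A) (E := E)) : Set (E →L[ℂ] E))) :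
    Alin (A := A) T :=
  closure_minimal (fun S hS => alin_of_mem_span hS) alin_isClosed hT


lemma rk1_isCompactOperator [FiniteDimensional ℂ A] {S : E →L[ℂ] E}
    (hS : S ∈ rk1 (A := A)) : IsCompactOperator (S : E → E) := by
  obtain ⟨x, y, hxy⟩ := hS
  let φ : A →ₗ[ℂ] E :=
    { toFun := fun a => x <• a
      map_add' := hcm_smul_add x
      map_smul' := fun c a => hcm_smul_complex c x a }
  let V : Submodule ℂ E := LinearMap.range φ
  have hV : FiniteDimensional ℂ V := inferInstance
  rw [isCompactOperator_iff_exists_mem_nhds_image_subset_compact]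
  refine ⟨Metric.ball 0 1, Metric.ball_mem_nhds 0 one_pos,
    V.subtype '' Metric.closedBall 0 ‖S‖, ?_, ?_⟩
  · exact ((isCompact_closedBall (0 : V) ‖S‖)).image V.subtypeL.continuous
  · rintro _ ⟨z, hz, rfl⟩
    have hmem : S z ∈ V := ⟨⟪y, z⟫, (hxy z).symm⟩
    refine ⟨⟨S z, hmem⟩, ?_, rfl⟩
    rw [Metric.mem_closedBall, dist_zero_right]
    show ‖S z‖ ≤ ‖S‖
    calc ‖S z‖ ≤ ‖S‖ * ‖z‖ := S.le_opNorm z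
      _ ≤ ‖S‖ * 1 := by
          have : ‖z‖ < 1 := by rwa [Metric.mem_ball, dist_zero_right] at hz
          exact mul_le_mul_of_nonneg_left this.le (norm_nonneg S)
      _ = ‖S‖ := mul_one _

lemma isCompactOperator_of_mem_closure [FiniteDimensional ℂ A] {K : E →L[ℂ] E}
    (hK : K ∈ closure (Submodule.span ℂ (rk1 (A := A) (E := E)) : Set (E →L[ℂ] E))) :
    IsCompactOperator (K : E → E) := by
  have hsub : (Submodule.span ℂ (rk1 (A := A) (E := E)) : Set (E →L[ℂ] E)) ⊆
      {T : E →L[ℂ] E | IsCompactOperator (T : E → E)} := by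
    intro T hT
    induction hT using Submodule.span_induction with
    | mem S hS => exact rk1_isCompactOperator hS
    | zero =>
      show IsCompactOperator ((0 : E →L[ℂ] E) : E → E)
      rw [ContinuousLinearMap.coe_zero']
      exact isCompactOperator_zero
    | add S₁ S₂ h₁ h₂ ih₁ ih₂ =>
      show IsCompactOperator ((S₁ + S₂ : E →L[ℂ] E) : E → E)
      rw [ContinuousLinearMap.coe_add']
      exact ih₁.add ih₂
    | smul c S hS ih =>
      show IsCompactOperator ((c • S : E →L[ℂ] E) : E → E)
      rw [ContinuousLinearMap.coe_smul']
      exact ih.smul c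
  exact closure_minimal hsub isClosed_setOf_isCompactOperator hK

lemma nontrivial_of_not_finGen (hfg : ¬ IsFinGen (A := A) (E := E)) : Nontrivial E := by
  by_contra h
  rw [not_nontrivial_iff_subsingleton] at h
  exact hfg ⟨0, Fin.elim0, fun x => by
    rw [Subsingleton.elim x 0]; exact Submodule.zero_mem _⟩

lemma finGen_of_id_mem
    (h : (1 : E →L[ℂ] E) ∈
      closure (Submodule.span ℂ (rk1 (A := A) (E := E)) : Set (E →L[ℂ] E))) :
    IsFinGen (A := A) (E := E) := by
  obtain ⟨F, hF, hFnear⟩ : ∃ F ∈ Submodule.span ℂ (rk1 (A := A) (E := E)), ‖1 - F‖ < 1 := by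
    rw [Metric.mem_closure_iff] at h
    obtain ⟨F, hF, hd⟩ := h 1 one_pos
    exact ⟨F, hF, by rwa [dist_eq_norm] at hd⟩
  have hunit : IsUnit F := by
    refine ⟨Units.oneSub (1 - F) hFnear, ?_⟩
    simp [Units.oneSub, sub_sub_cancel]
  obtain ⟨u, hu⟩ := hunit
  have hFG : F * ((u⁻¹ : Units (E →L[ℂ] E)) : E →L[ℂ] E) = 1 := by
    rw [← hu]; exact u.mul_inv
  obtain ⟨n, c, g, hsum⟩ := Submodule.mem_span_set'.mp hF
  choose xs ys hxy using fun i : Fin n => (g i).2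
  refine ⟨n, xs, fun z => ?_⟩
  have hz : z = F (((u⁻¹ : Units (E →L[ℂ] E)) : E →L[ℂ] E) z) := by
    have := congrArg (fun T : E →L[ℂ] E => T z) hFG
    simpa using this.symm
  rw [hz, ← hsum]
  rw [ContinuousLinearMap.sum_apply]
  refine Submodule.sum_mem _ fun i _ => ?_
  rw [ContinuousLinearMap.smul_apply, hxy i]
  exact Submodule.smul_mem _ _ (Submodule.subset_span ⟨i, _, rfl⟩)

variable (K : E →L[ℂ] E)



/-- A-linear commutant of `K`. -/
def Comm : Set (E →L[ℂ] E) := {T | Alin (A := A) T ∧ T.comp K = K.comp T}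

def genSet (x : E) : Set E := {w | ∃ T ∈ Comm (A := A) K, ∃ a : A, w = T x <• a}

/-- The hyperinvariant closed submodule generated by `x`. -/
noncomputable def Wx (x : E) : Submodule ℂ E :=
  (Submodule.span ℂ (genSet (A := A) K x)).topologicalClosure

lemma one_mem_Comm : (1 : E →L[ℂ] E) ∈ Comm (A := A) K := by
  refine ⟨fun a x => rfl, ?_⟩
  rw [ContinuousLinearMap.one_def, ContinuousLinearMap.comp_id, ContinuousLinearMap.id_comp]

lemma mem_Wx_self (x : E) : x ∈ Wx (A := A) K x := by
  apply Submodule.le_topologicalClosure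
  apply Submodule.subset_span
  exact ⟨1, one_mem_Comm K, 1, by rw [hcm_smul_one]; rfl⟩

lemma Wx_isClosed (x : E) : IsClosed (Wx (A := A) K x : Set E) :=
  Submodule.isClosed_topologicalClosure _

lemma span_genSet_smul {x : E} (a : A) {w : E}
    (hw : w ∈ Submodule.span ℂ (genSet (A := A) K x)) :
    w <• a ∈ Submodule.span ℂ (genSet (A := A) K x) := by
  induction hw using Submodule.span_induction with
  | mem w hw =>
    obtain ⟨T, hT, b, rfl⟩ := hw
    rw [hcm_smul_smul]
    exact Submodule.subset_span ⟨T, hT, b * a, rfl⟩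
  | zero => rw [hcm_zero_smul]; exact Submodule.zero_mem _
  | add u v hu hv ihu ihv => rw [hcm_add_smul]; exact Submodule.add_mem _ ihu ihv
  | smul c u hu ihu => rw [hcm_smul_comm]; exact Submodule.smul_mem _ _ ihu

lemma Wx_smul {x : E} (a : A) {w : E} (hw : w ∈ Wx (A := A) K x) :
    w <• a ∈ Wx (A := A) K x := by
  have h1 : w ∈ closure (Submodule.span ℂ (genSet (A := A) K x) : Set E) := hw
  have h2 : Rmul a w ∈ closure (Submodule.span ℂ (genSet (A := A) K x) : Set E) := by
    refine map_mem_closure (Rmul a).continuous h1 ?_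
    intro z hz
    rw [Rmul_apply]
    exact span_genSet_smul K a hz
  rw [Rmul_apply] at h2
  exact h2

lemma comp_mem_Comm {S T : E →L[ℂ] E} (hS1 : Alin (A := A) S) (hS2 : S.comp K = K.comp S)
    (hT : T ∈ Comm (A := A) K) : S.comp T ∈ Comm (A := A) K := by
  obtain ⟨hT1, hT2⟩ := hT
  refine ⟨fun a z => ?_, ?_⟩
  · show S (T (z <• a)) = S (T z) <• a
    rw [hT1, hS1]
  · rw [ContinuousLinearMap.comp_assoc, hT2, ← ContinuousLinearMap.comp_assoc, hS2,
      ContinuousLinearMap.comp_assoc]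

lemma Wx_invariant {S : E →L[ℂ] E} (hS1 : Alin (A := A) S) (hS2 : S.comp K = K.comp S)
    {x w : E} (hw : w ∈ Wx (A := A) K x) : S w ∈ Wx (A := A) K x := by
  have h1 : w ∈ closure (Submodule.span ℂ (genSet (A := A) K x) : Set E) := hw
  refine map_mem_closure S.continuous h1 ?_
  intro z hz
  induction hz using Submodule.span_induction with
  | mem u hu =>
    obtain ⟨T, hT, a, rfl⟩ := hu
    rw [hS1]
    exact Submodule.subset_span ⟨S.comp T, comp_mem_Comm K hS1 hS2 hT, a, rfl⟩
  | zero => rw [map_zero]; exact Submodule.zero_mem _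
  | add u v hu hv ihu ihv => rw [map_add]; exact Submodule.add_mem _ ihu ihv
  | smul c u hu ihu => rw [map_smul]; exact Submodule.smul_mem _ _ ihu

lemma exists_op_of_mem_span (hKalin : Alin (A := A) K) {x w : E}
    (hw : w ∈ Submodule.span ℂ (genSet (A := A) K x)) :
    ∃ Φ : E →L[ℂ] E, Φ.comp K = K.comp Φ ∧ Φ x = w := by
  induction hw using Submodule.span_induction with
  | mem u hu =>
    obtain ⟨T, hT, a, rfl⟩ := hu
    refine ⟨(Rmul a).comp T, ?_, by simp [Rmul_apply]⟩
    ext z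
    show Rmul a (T (K z)) = K (Rmul a (T z))
    rw [Rmul_apply, Rmul_apply, hKalin]
    have : T (K z) = K (T z) := by
      have := congrArg (fun U : E →L[ℂ] E => U z) hT.2
      simpa using this
    rw [this]
  | zero => exact ⟨0, by simp, by simp⟩
  | add u v hu hv ihu ihv =>
    obtain ⟨Φ₁, h₁, e₁⟩ := ihu
    obtain ⟨Φ₂, h₂, e₂⟩ := ihv
    exact ⟨Φ₁ + Φ₂, by rw [ContinuousLinearMap.add_comp, ContinuousLinearMap.comp_add, h₁, h₂],
      by simp [e₁, e₂]⟩
  | smul c u hu ihu =>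
    obtain ⟨Φ, h₁, e₁⟩ := ihu
    exact ⟨c • Φ, by rw [ContinuousLinearMap.smul_comp, ContinuousLinearMap.comp_smul, h₁],
      by simp [e₁]⟩

lemma dense_orbit (hKalin : Alin (A := A) K) {x : E} (hx : Wx (A := A) K x = ⊤)
    (z : E) {ε : ℝ} (hε : 0 < ε) :
    ∃ Φ : E →L[ℂ] E, Φ.comp K = K.comp Φ ∧ ‖Φ x - z‖ < ε := by
  have hz : z ∈ closure (Submodule.span ℂ (genSet (A := A) K x) : Set E) := by
    have : z ∈ Wx (A := A) K x := hx ▸ Submodule.mem_top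
    exact this
  rw [Metric.mem_closure_iff] at hz
  obtain ⟨w, hw, hd⟩ := hz ε hε
  obtain ⟨Φ, hΦ, rfl⟩ := exists_op_of_mem_span K hKalin hw
  exact ⟨Φ, hΦ, by rwa [← dist_eq_norm, dist_comm]⟩

-- eigenvalue of modulus equal to spectral radius, for compact operators
lemma exists_eigenvector_of_spectralRadius_ne_zero [Nontrivial E] (K : E →L[ℂ] E)
    (hKc : IsCompactOperator (K : E → E)) (hr : spectralRadius ℂ K ≠ 0) :
    ∃ (v : E) (lam : ℂ), v ≠ 0 ∧ lam ≠ 0 ∧ K v = lam • v := by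
  have hnt : Nontrivial (E →L[ℂ] E) := by
    obtain ⟨e, he⟩ := exists_ne (0 : E)
    refine ⟨1, 0, fun h => he ?_⟩
    have := congrArg (fun T : E →L[ℂ] E => T e) h
    simpa using this
  obtain ⟨lam, hlam_mem, hlam_eq⟩ :=
    spectrum.exists_nnnorm_eq_spectralRadius_of_nonempty (spectrum.nonempty K)
  have hlam0 : lam ≠ 0 := by
    rintro rfl
    apply hr
    rw [← hlam_eq]
    simp
  set T : E →L[ℂ] E := algebraMap ℂ (E →L[ℂ] E) lam - K with hT
  have hTz : ∀ w : E, T w = lam • w - K w := fun w => by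
    rw [hT, ContinuousLinearMap.sub_apply, Algebra.algebraMap_eq_smul_one,
      ContinuousLinearMap.smul_apply, ContinuousLinearMap.one_apply]
  -- T is not bounded below
  have hnbb : ∀ c : ℝ, 0 < c → ∃ z : E, ‖T z‖ < c * ‖z‖ := by
    by_contra hcon
    push_neg at hcon
    obtain ⟨c, hc, hbb⟩ := hcon
    -- then T is invertible, contradicting lam ∈ spectrum
    have hlam_norm : 0 < ‖lam‖ := norm_pos_iff.mpr hlam0
    set t : ℝ := c / (4 * ‖lam‖) with ht
    have ht0 : 0 < t := by positivity
    have htsmall : ‖lam‖ * t < c / 2 := by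
      have h4 : ‖lam‖ * t = c / 4 := by
        rw [ht, eq_div_iff (by norm_num : (4:ℝ) ≠ 0)]
        field_simp
      rw [h4]; linarith
    set mu : ℂ := (1 + (t : ℂ)) * lam with hmu
    have hmulam : ‖mu - lam‖ = ‖lam‖ * t := by
      have : mu - lam = (t : ℂ) * lam := by rw [hmu]; ring
      rw [this, norm_mul, Complex.norm_real, Real.norm_of_nonneg ht0.le, mul_comm]
    have hmu_big : ‖lam‖₊ < ‖mu‖₊ := by
      have h1 : ‖mu‖ = (1 + t) * ‖lam‖ := by
        rw [hmu, norm_mul]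
        congr 1
        rw [show ((1 : ℂ) + (t : ℂ)) = ((1 + t : ℝ) : ℂ) by push_cast; ring,
          Complex.norm_real, Real.norm_of_nonneg (by linarith)]
      have : ‖lam‖ < ‖mu‖ := by rw [h1]; nlinarith
      exact this
    have hmu_res : mu ∈ resolventSet ℂ K := by
      apply spectrum.mem_resolventSet_of_spectralRadius_lt
      rw [← hlam_eq]
      exact_mod_cast hmu_big
    have hmu_unit : IsUnit (algebraMap ℂ (E →L[ℂ] E) mu - K) :=
      spectrum.mem_resolventSet_iff.mp hmu_res
    set Tmu : E →L[ℂ] E := algebraMap ℂ (E →L[ℂ] E) mu - K with hTmu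
    -- Tmu bounded below by c/2
    have hTmu_diff : Tmu - T = algebraMap ℂ (E →L[ℂ] E) (mu - lam) := by
      rw [hTmu, hT, map_sub]; abel
    have hTmu_bb : ∀ z : E, c / 2 * ‖z‖ ≤ ‖Tmu z‖ := by
      intro z
      have h0 : Tmu z - T z = (mu - lam) • z := by
        have := congrArg (fun U : E →L[ℂ] E => U z) hTmu_diff
        simp only [ContinuousLinearMap.sub_apply] at this
        rw [this, Algebra.algebraMap_eq_smul_one, ContinuousLinearMap.smul_apply,
          ContinuousLinearMap.one_apply]
      have h1 : Tmu z = T z + ((mu - lam) • z) := by rw [← h0]; abel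
      have h2 : ‖(mu - lam) • z‖ = ‖lam‖ * t * ‖z‖ := by
        rw [norm_smul, hmulam]
      have h3 : ‖T z‖ ≤ ‖Tmu z‖ + ‖lam‖ * t * ‖z‖ := by
        calc ‖T z‖ = ‖Tmu z - (mu - lam) • z‖ := by rw [h1, add_sub_cancel_right]
          _ ≤ ‖Tmu z‖ + ‖(mu - lam) • z‖ := norm_sub_le _ _
          _ = ‖Tmu z‖ + ‖lam‖ * t * ‖z‖ := by rw [h2]
      have h4 := hbb z
      nlinarith [norm_nonneg z]
    obtain ⟨u, hu⟩ := hmu_unit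
    -- inverse bound
    have hu_inv : ∀ w : E, ‖((u⁻¹ : (E →L[ℂ] E)ˣ) : E →L[ℂ] E) w‖ ≤ (2 / c) * ‖w‖ := by
      intro w
      set z := ((u⁻¹ : (E →L[ℂ] E)ˣ) : E →L[ℂ] E) w with hz
      have h1 : Tmu z = w := by
        rw [hz]
        have : (Tmu.comp ((u⁻¹ : (E →L[ℂ] E)ˣ) : E →L[ℂ] E)) w = w := by
          rw [← hu]
          have h2 : ((u : E →L[ℂ] E).comp ((u⁻¹ : (E →L[ℂ] E)ˣ) : E →L[ℂ] E)) = 1 := by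
            rw [← ContinuousLinearMap.mul_def, u.mul_inv]
          rw [h2, ContinuousLinearMap.one_apply]
        exact this
      have h2 := hTmu_bb z
      rw [h1] at h2
      rw [div_mul_eq_mul_div, le_div_iff₀ hc]
      nlinarith
    have hinv_norm : ‖((u⁻¹ : (E →L[ℂ] E)ˣ) : E →L[ℂ] E)‖ ≤ 2 / c :=
      ContinuousLinearMap.opNorm_le_bound _ (by positivity) hu_inv
    have hinv_pos : 0 < ‖((u⁻¹ : (E →L[ℂ] E)ˣ) : E →L[ℂ] E)‖ := Units.norm_pos u⁻¹
    have hnear : ‖T - (u : E →L[ℂ] E)‖ < ‖((u⁻¹ : (E →L[ℂ] E)ˣ) : E →L[ℂ] E)‖⁻¹ := by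
      have h1 : T - (u : E →L[ℂ] E) = - algebraMap ℂ (E →L[ℂ] E) (mu - lam) := by
        rw [hu, ← hTmu_diff]; abel
      have h2 : ‖T - (u : E →L[ℂ] E)‖ ≤ ‖lam‖ * t := by
        rw [h1, norm_neg, Algebra.algebraMap_eq_smul_one]
        calc ‖(mu - lam) • (1 : E →L[ℂ] E)‖ ≤ ‖mu - lam‖ * ‖(1 : E →L[ℂ] E)‖ :=
              ContinuousLinearMap.opNorm_smul_le _ _
          _ ≤ ‖mu - lam‖ * 1 := by
              gcongr
              exact ContinuousLinearMap.norm_id_le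
          _ = ‖lam‖ * t := by rw [mul_one, hmulam]
      have h3 : c / 2 ≤ ‖((u⁻¹ : (E →L[ℂ] E)ˣ) : E →L[ℂ] E)‖⁻¹ := by
        rw [le_inv_comm₀ (by positivity) hinv_pos]
        calc ‖((u⁻¹ : (E →L[ℂ] E)ˣ) : E →L[ℂ] E)‖ ≤ 2 / c := hinv_norm
          _ = (c / 2)⁻¹ := by rw [inv_div]
      linarith
    have : IsUnit T := (u.ofNearby T hnear).isUnit
    exact (spectrum.mem_iff.mp hlam_mem) this
  -- construct eigenvector via compactness
  have hseq : ∀ n : ℕ, ∃ x : E, ‖x‖ = 1 ∧ ‖T x‖ < 1 / (n + 1) := by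
    intro n
    obtain ⟨z, hz⟩ := hnbb (1 / (n + 1)) (by positivity)
    have hz0 : z ≠ 0 := by
      rintro rfl
      simp at hz
    refine ⟨‖z‖⁻¹ • z, ?_, ?_⟩
    · rw [norm_smul, norm_inv, norm_norm, inv_mul_cancel₀ (norm_ne_zero_iff.mpr hz0)]
    · have h1 : T (‖z‖⁻¹ • z) = ‖z‖⁻¹ • T z := T.map_smul_of_tower _ z
      rw [h1, norm_smul, norm_inv, norm_norm]
      rw [inv_mul_lt_iff₀ (norm_pos_iff.mpr hz0)]
      calc ‖T z‖ < 1 / (n + 1) * ‖z‖ := hz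
        _ = ‖z‖ * (1 / (n + 1)) := mul_comm _ _
  choose xs hxs1 hxs2 using hseq
  have hxball : ∀ n, xs n ∈ Metric.closedBall (0 : E) 1 := fun n => by
    rw [Metric.mem_closedBall, dist_zero_right, hxs1]
  have hQ : IsCompact (closure ((K : E → E) '' Metric.closedBall 0 1)) := by
    exact hKc.isCompact_closure_image_of_bounded Metric.isBounded_closedBall
  have hKxs : ∀ n, K (xs n) ∈ closure ((K : E → E) '' Metric.closedBall 0 1) := fun n =>
    subset_closure ⟨xs n, hxball n, rfl⟩
  obtain ⟨y, _, φ, hφ, hconv⟩ := hQ.tendsto_subseq hKxs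
  -- T (xs n) → 0
  have hT0 : Filter.Tendsto (fun n => T (xs (φ n))) Filter.atTop (nhds 0) := by
    rw [tendsto_iff_norm_sub_tendsto_zero]
    simp only [sub_zero]
    apply squeeze_zero (fun n => norm_nonneg _) (fun n => (hxs2 (φ n)).le)
    have : Filter.Tendsto (fun n : ℕ => 1 / ((n : ℝ) + 1)) Filter.atTop (nhds 0) :=
      tendsto_one_div_add_atTop_nhds_zero_nat
    exact this.comp hφ.tendsto_atTop
  -- xs (φ n) → lam⁻¹ • y
  have hxconv : Filter.Tendsto (fun n => xs (φ n)) Filter.atTop (nhds (lam⁻¹ • y)) := by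
    have h1 : ∀ n, xs (φ n) = lam⁻¹ • (T (xs (φ n)) + K (xs (φ n))) := by
      intro n
      have : T (xs (φ n)) + K (xs (φ n)) = lam • xs (φ n) := by
        rw [hTz]; abel
      rw [this, smul_smul, inv_mul_cancel₀ hlam0, one_smul]
    have h2 : Filter.Tendsto (fun n => T (xs (φ n)) + K (xs (φ n))) Filter.atTop (nhds (0 + y)) :=
      hT0.add hconv
    rw [zero_add] at h2
    exact (h2.const_smul lam⁻¹).congr (fun n => (h1 n).symm)
  set v := lam⁻¹ • y with hv
  have hvnorm : ‖v‖ = 1 := by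
    have h1 : Filter.Tendsto (fun n => ‖xs (φ n)‖) Filter.atTop (nhds ‖v‖) :=
      (continuous_norm.tendsto v).comp hxconv
    simp_rw [hxs1] at h1
    exact (tendsto_const_nhds_iff.mp h1).symm
  have hv0 : v ≠ 0 := by
    intro h
    rw [h, norm_zero] at hvnorm
    norm_num at hvnorm
  refine ⟨v, lam, hv0, hlam0, ?_⟩
  have hKv : Filter.Tendsto (fun n => K (xs (φ n))) Filter.atTop (nhds (K v)) :=
    (K.continuous.tendsto v).comp hxconv
  have hKy : K v = y := tendsto_nhds_unique hKv hconv
  rw [hKy, hv, smul_smul, mul_inv_cancel₀ hlam0, one_smul]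

open Filter

lemma gelfand_pow_small (K : E →L[ℂ] E) (hrad : spectralRadius ℂ K = 0) {M : ℝ} (hM : 1 ≤ M) :
    ∃ n : ℕ, 2 ≤ n ∧ ‖(K ^ n : E →L[ℂ] E)‖ ≤ ((2 * M)⁻¹) ^ n := by
  have hM0 : (0:ℝ) < 2 * M := by linarith
  have hinv0 : (0:ℝ) < (2 * M)⁻¹ := by positivity
  set ε : NNReal := ⟨(2 * M)⁻¹, hinv0.le⟩ with hε
  have hε0 : (0 : ENNReal) < (ε : ENNReal) := by
    rw [ENNReal.coe_pos]
    exact hinv0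
  have htend := spectrum.pow_nnnorm_pow_one_div_tendsto_nhds_spectralRadius K
  rw [hrad] at htend
  have hev : ∀ᶠ n : ℕ in atTop, (‖K ^ n‖₊ : ENNReal) ^ (1 / (n : ℝ)) < (ε : ENNReal) :=
    htend.eventually_lt_const hε0
  obtain ⟨n, hnlt, hn2⟩ := (hev.and (eventually_ge_atTop 2)).exists
  have hn0 : ((n : ℝ)) ≠ 0 := by
    have : (0:ℕ) < n := lt_of_lt_of_le (by norm_num) hn2
    exact_mod_cast this.ne'
  have h2 := ENNReal.rpow_le_rpow hnlt.le (Nat.cast_nonneg n)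
  rw [← ENNReal.rpow_mul, one_div, inv_mul_cancel₀ hn0, ENNReal.rpow_one,
    ENNReal.rpow_natCast] at h2
  rw [← ENNReal.coe_pow, ENNReal.coe_le_coe] at h2
  refine ⟨n, hn2, ?_⟩
  calc ‖K ^ n‖ = ((‖K ^ n‖₊ : NNReal) : ℝ) := rfl
    _ ≤ ((ε ^ n : NNReal) : ℝ) := by exact_mod_cast h2
    _ = ((2 * M)⁻¹) ^ n := by rw [NNReal.coe_pow]; rfl

lemma hilden_contradiction [Nontrivial E] (K : E →L[ℂ] E)
    (hKc : IsCompactOperator (K : E → E)) (hrad : spectralRadius ℂ K = 0) (hK0 : K ≠ 0)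
    (hdense : ∀ y : E, y ≠ 0 → ∀ z : E, ∀ ε : ℝ, 0 < ε →
      ∃ Φ : E →L[ℂ] E, Φ.comp K = K.comp Φ ∧ ‖Φ y - z‖ < ε) : False := by
  -- pick x₀ with K x₀ ≠ 0
  obtain ⟨x₀, hx₀⟩ : ∃ x : E, K x ≠ 0 := by
    by_contra h
    push_neg at h
    exact hK0 (ContinuousLinearMap.ext fun x => by rw [h x]; rfl)
  have hx₀0 : x₀ ≠ 0 := fun h => hx₀ (by rw [h, map_zero])
  have hKnorm : (0:ℝ) < ‖K‖ := by
    rcases (norm_nonneg K).lt_or_eq with h | h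
    · exact h
    · exact absurd (norm_eq_zero.mp h.symm) hK0
  set r : ℝ := min (‖x₀‖ / 2) (‖K x₀‖ / (2 * ‖K‖)) with hr
  have hr0 : 0 < r := by
    apply lt_min
    · have : 0 < ‖x₀‖ := norm_pos_iff.mpr hx₀0
      linarith
    · have : 0 < ‖K x₀‖ := norm_pos_iff.mpr hx₀
      positivity
  set B : Set E := Metric.closedBall x₀ r with hB
  have hBnorm : ∀ x ∈ B, ‖x₀‖ / 2 ≤ ‖x‖ := by
    intro x hx
    rw [hB, Metric.mem_closedBall, dist_comm, dist_eq_norm] at hx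
    have h1 : ‖x₀‖ ≤ ‖x₀ - x‖ + ‖x‖ := by
      calc ‖x₀‖ = ‖(x₀ - x) + x‖ := by rw [sub_add_cancel]
        _ ≤ ‖x₀ - x‖ + ‖x‖ := norm_add_le _ _
    have h2 : r ≤ ‖x₀‖ / 2 := min_le_left _ _
    linarith
  have hKB : ∀ x ∈ B, ‖K x₀‖ / 2 ≤ ‖K x‖ := by
    intro x hx
    rw [hB, Metric.mem_closedBall, dist_comm, dist_eq_norm] at hx
    have h1 : ‖K x₀‖ ≤ ‖K (x₀ - x)‖ + ‖K x‖ := by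
      calc ‖K x₀‖ = ‖K (x₀ - x) + K x‖ := by rw [← map_add, sub_add_cancel]
        _ ≤ ‖K (x₀ - x)‖ + ‖K x‖ := norm_add_le _ _
    have h2 : ‖K (x₀ - x)‖ ≤ ‖K‖ * r :=
      le_trans (K.le_opNorm _) (mul_le_mul_of_nonneg_left hx (norm_nonneg K))
    have h3 : r ≤ ‖K x₀‖ / (2 * ‖K‖) := min_le_right _ _
    have hKne : ‖K‖ ≠ 0 := hKnorm.ne'
    have h4 : ‖K‖ * r ≤ ‖K x₀‖ / 2 := by
      calc ‖K‖ * r = r * ‖K‖ := mul_comm _ _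
        _ ≤ ‖K x₀‖ / (2 * ‖K‖) * ‖K‖ := by gcongr
        _ = ‖K x₀‖ / 2 := by field_simp
    linarith
  set Q : Set E := closure ((K : E → E) '' B) with hQ
  have hQcomp : IsCompact Q := hKc.isCompact_closure_image_of_bounded Metric.isBounded_closedBall
  have hQnorm : ∀ y ∈ Q, ‖K x₀‖ / 2 ≤ ‖y‖ := by
    intro y hy
    have hsub : Q ⊆ {y : E | ‖K x₀‖ / 2 ≤ ‖y‖} := by
      apply closure_minimal
      · rintro _ ⟨x, hx, rfl⟩
        exact hKB x hx
      · exact isClosed_le continuous_const continuous_norm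
    exact hsub hy
  have hQ0 : ∀ y ∈ Q, y ≠ 0 := by
    intro y hy h0
    have := hQnorm y hy
    rw [h0, norm_zero] at this
    have : (0:ℝ) < ‖K x₀‖ := norm_pos_iff.mpr hx₀
    linarith [hQnorm y hy]
  -- choose operators
  have hcov : ∀ y : E, y ∈ Q → ∃ Φ : E →L[ℂ] E, Φ.comp K = K.comp Φ ∧ ‖Φ y - x₀‖ < r :=
    fun y hy => hdense y (hQ0 y hy) x₀ r hr0
  choose Φf hΦcomm hΦnear using hcov
  -- finite subcover
  have hU : ∀ (y : E) (hy : y ∈ Q), {z : E | ‖Φf y hy z - x₀‖ < r} ∈ nhds y := by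
    intro y hy
    have hopen : IsOpen {z : E | ‖Φf y hy z - x₀‖ < r} := by
      have : {z : E | ‖Φf y hy z - x₀‖ < r} =
          (fun z => Φf y hy z) ⁻¹' Metric.ball x₀ r := by
        ext z
        simp [Metric.mem_ball, dist_eq_norm]
      rw [this]
      exact Metric.isOpen_ball.preimage (Φf y hy).continuous
    exact hopen.mem_nhds (hΦnear y hy)
  obtain ⟨t, hcover⟩ := hQcomp.elim_nhds_subcover' (fun y hy => {z : E | ‖Φf y hy z - x₀‖ < r}) hU
  -- bound on norms
  have hKx₀Q : K x₀ ∈ Q := subset_closure ⟨x₀, Metric.mem_closedBall_self hr0.le, rfl⟩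
  have htne : t.Nonempty := by
    by_contra h
    rw [Finset.not_nonempty_iff_eq_empty] at h
    have := hcover hKx₀Q
    rw [h] at this
    simp at this
  set M : ℝ := max 1 (t.sup' htne fun y => ‖Φf y.1 y.2‖) with hM
  have hM1 : 1 ≤ M := le_max_left _ _
  have hMb : ∀ y ∈ t, ‖Φf y.1 y.2‖ ≤ M := fun y hy =>
    le_trans (Finset.le_sup' (f := fun y => ‖Φf y.1 y.2‖) hy) (le_max_right _ _)
  -- the iteration
  have hiter : ∀ n : ℕ, ∃ Φ : E →L[ℂ] E, Φ.comp K = K.comp Φ ∧ ‖Φ‖ ≤ M ^ n ∧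
      Φ ((K ^ n) x₀) ∈ B := by
    intro n
    induction n with
    | zero =>
      refine ⟨1, ?_, ?_, ?_⟩
      · rw [ContinuousLinearMap.one_def, ContinuousLinearMap.comp_id,
          ContinuousLinearMap.id_comp]
      · rw [pow_zero]
        exact ContinuousLinearMap.norm_id_le
      · rw [pow_zero]
        show (1 : E →L[ℂ] E) ((1 : E →L[ℂ] E) x₀) ∈ B
        rw [ContinuousLinearMap.one_apply, ContinuousLinearMap.one_apply]
        exact Metric.mem_closedBall_self hr0.le
    | succ n ih =>
      obtain ⟨Φ, hcomm, hnorm, hmem⟩ := ih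
      set y : E := K (Φ ((K ^ n) x₀)) with hy
      have hyQ : y ∈ Q := subset_closure ⟨Φ ((K ^ n) x₀), hmem, rfl⟩
      have := hcover hyQ
      rw [Set.mem_iUnion] at this
      obtain ⟨⟨w, hwQ⟩, hw⟩ := this
      rw [Set.mem_iUnion] at hw
      obtain ⟨hwt, hwy⟩ := hw
      have hwy' : ‖Φf w hwQ y - x₀‖ < r := hwy
      refine ⟨(Φf w hwQ).comp Φ, ?_, ?_, ?_⟩
      · rw [ContinuousLinearMap.comp_assoc, hcomm, ← ContinuousLinearMap.comp_assoc,
          hΦcomm w hwQ, ContinuousLinearMap.comp_assoc]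
      · calc ‖(Φf w hwQ).comp Φ‖ ≤ ‖Φf w hwQ‖ * ‖Φ‖ := ContinuousLinearMap.opNorm_comp_le _ _
          _ ≤ M * M ^ n := by
              apply mul_le_mul (hMb ⟨w, hwQ⟩ hwt) hnorm (norm_nonneg Φ) (by linarith)
          _ = M ^ (n + 1) := by rw [pow_succ, mul_comm]
      · have h1 : (K ^ (n + 1)) x₀ = K ((K ^ n) x₀) := by
          rw [pow_succ']
          rfl
        have h2 : ((Φf w hwQ).comp Φ) ((K ^ (n + 1)) x₀) = Φf w hwQ y := by
          rw [ContinuousLinearMap.comp_apply, h1]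
          congr 1
          have := congrArg (fun U : E →L[ℂ] E => U ((K ^ n) x₀)) hcomm
          simpa [hy] using this
        rw [h2, hB, Metric.mem_closedBall, dist_eq_norm]
        exact hwy'.le
  -- norm contradiction
  obtain ⟨n, hn2, hKn⟩ := gelfand_pow_small K hrad hM1
  obtain ⟨Φ, hcomm, hnorm, hmem⟩ := hiter n
  have hlow : ‖x₀‖ / 2 ≤ ‖Φ ((K ^ n) x₀)‖ := hBnorm _ hmem
  have hup : ‖Φ ((K ^ n) x₀)‖ ≤ M ^ n * (‖(K ^ n : E →L[ℂ] E)‖ * ‖x₀‖) := by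
    calc ‖Φ ((K ^ n) x₀)‖ ≤ ‖Φ‖ * ‖(K ^ n) x₀‖ := Φ.le_opNorm _
      _ ≤ M ^ n * (‖(K ^ n : E →L[ℂ] E)‖ * ‖x₀‖) := by
          apply mul_le_mul hnorm ((K ^ n).le_opNorm x₀) (norm_nonneg _) (by positivity)
  have hMKn : M ^ n * ‖(K ^ n : E →L[ℂ] E)‖ ≤ (1/2 : ℝ) ^ n := by
    calc M ^ n * ‖(K ^ n : E →L[ℂ] E)‖ ≤ M ^ n * ((2 * M)⁻¹) ^ n := by
          apply mul_le_mul_of_nonneg_left hKn (by positivity)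
      _ = (M * (2 * M)⁻¹) ^ n := by rw [mul_pow]
      _ = (1/2 : ℝ) ^ n := by
          congr 1
          field_simp
  have hhalf : ((1:ℝ)/2) ^ n ≤ (1/2 : ℝ) ^ 2 :=
    pow_le_pow_of_le_one (by norm_num) (by norm_num) hn2
  have hx₀norm : (0:ℝ) < ‖x₀‖ := norm_pos_iff.mpr hx₀0
  nlinarith [hup, hlow, hMKn, hhalf, hx₀norm,
    mul_le_mul_of_nonneg_right hMKn (norm_nonneg x₀)]

/-- Lomonosov-type theorem: over a finite dimensional C*-algebra, if `E` is not finitely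
generated, then every nonzero compact operator `K` on `E` has a proper nonzero hyperinvariant
closed submodule. -/
theorem stmt19 [FiniteDimensional ℂ A] (hfg : ¬ IsFinGen (A := A) (E := E))
    (K : E →L[ℂ] E) (hK : IsCompactOp (A := A) K) (hK0 : K ≠ 0) :
    ∃ W : Submodule ℂ E, IsClosedSubmodule (A := A) W ∧ W ≠ ⊥ ∧ W ≠ ⊤ ∧
      ∀ S S' : E →L[ℂ] E, IsAdjointableWith (A := A) S S' → S.comp K = K.comp S →
        ∀ x ∈ W, S x ∈ W := by
  have hKmem : K ∈ closure
      ((Submodule.span ℂ (rk1 (A := A) (E := E)) : Submodule ℂ (E →L[ℂ] E)) :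
        Set (E →L[ℂ] E)) := hK
  have hKalin : Alin (A := A) K := alin_of_isCompactOp hKmem
  by_cases hW : ∃ x : E, x ≠ 0 ∧ Wx (A := A) K x ≠ ⊤
  · obtain ⟨x, hx0, hxt⟩ := hW
    refine ⟨Wx (A := A) K x, ⟨Wx_isClosed K x, fun a w hw => Wx_smul K a hw⟩, ?_, hxt, ?_⟩
    · intro h
      have hx := mem_Wx_self (A := A) K x
      rw [h] at hx
      exact hx0 (Submodule.mem_bot ℂ |>.mp hx)
    · intro S S' hSS hSK w hw
      exact Wx_invariant K hSS.1 hSK hw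
  · exfalso
    push_neg at hW
    have hnt : Nontrivial E := nontrivial_of_not_finGen hfg
    have hKc : IsCompactOperator (K : E → E) := isCompactOperator_of_mem_closure hKmem
    -- no nonzero eigenvalues
    have hno : ∀ (v : E) (lam : ℂ), v ≠ 0 → lam ≠ 0 → K v ≠ lam • v := by
      intro v lam hv hlam hKv
      have hsub : (Submodule.span ℂ (genSet (A := A) K v) : Set E) ⊆
          {w : E | K w = lam • w} := by
        intro w hw
        induction hw using Submodule.span_induction with
        | mem u hu =>
          obtain ⟨T, hT, a, rfl⟩ := hu
          show K (T v <• a) = lam • (T v <• a)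
          rw [hKalin]
          have h1 : K (T v) = T (K v) := by
            have := congrArg (fun U : E →L[ℂ] E => U v) hT.2
            simpa using this.symm
          rw [h1, hKv, map_smul, hcm_smul_comm]
        | zero => show K 0 = lam • (0 : E); rw [map_zero, smul_zero]
        | add u₁ u₂ h₁ h₂ ih₁ ih₂ =>
          show K (u₁ + u₂) = lam • (u₁ + u₂)
          rw [map_add, ih₁, ih₂, smul_add]
        | smul c u hu ih =>
          show K (c • u) = lam • (c • u)
          rw [map_smul, ih, smul_comm]
      have hclosed : IsClosed {w : E | K w = lam • w} :=
        isClosed_eq K.continuous (continuous_id.const_smul lam)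
      have hall : ∀ w : E, K w = lam • w := by
        intro w
        have hwmem : w ∈ closure (Submodule.span ℂ (genSet (A := A) K v) : Set E) := by
          have : w ∈ Wx (A := A) K v := (hW v hv) ▸ Submodule.mem_top
          exact this
        exact closure_minimal hsub hclosed hwmem
      have hid : (1 : E →L[ℂ] E) ∈ closure
          ((Submodule.span ℂ (rk1 (A := A) (E := E)) : Submodule ℂ (E →L[ℂ] E)) :
            Set (E →L[ℂ] E)) := by
        have h1 : lam⁻¹ • K = 1 := by
          ext w
          rw [ContinuousLinearMap.smul_apply, hall w, smul_smul, inv_mul_cancel₀ hlam,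
            one_smul, ContinuousLinearMap.one_apply]
        rw [← h1]
        exact (Submodule.span ℂ (rk1 (A := A) (E := E))).topologicalClosure.smul_mem
          lam⁻¹ hKmem
      exact hfg (finGen_of_id_mem hid)
    have hrad : spectralRadius ℂ K = 0 := by
      by_contra h
      obtain ⟨v, lam, hv, hlam, hKv⟩ := exists_eigenvector_of_spectralRadius_ne_zero K hKc h
      exact hno v lam hv hlam hKv
    exact hilden_contradiction K hKc hrad hK0
      (fun y hy z ε hε => dense_orbit K hKalin (hW y hy) z hε)

end
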